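/- arXiv:1906.05316 — 2 statements merged into one kernel-verified Lean document; each statement's English description precedes it below -/
import Mathlib

section
/- Let W ~ PH(π, T) with density f_W(x) = π e^{Tx} t, t = −Te. Then for every ν > 0, E[W^ν] = Γ(ν + 1) · π (−T)^{-ν} e, where (−T)^{-ν} is defined via functional calculus (all eigenvalues of −T have positive real part). -/
open MeasureTheory Matrix

/-- The matrix exponential `e^A = Σ_{k≥0} A^k / k!`. -/
noncomputable def matExp {p : ℕ} (A : Matrix (Fin p) (Fin p) ℝ) :
    Matrix (Fin p) (Fin p) ℝ :=
  ∑' k : ℕ, ((k.factorial : ℝ))⁻¹ • A ^ k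

section Aux

open NormedSpace Set

variable {p : ℕ}

attribute [local instance] Matrix.linftyOpNormedRing Matrix.linftyOpNormedAlgebra

variable {p : ℕ}

/-- polynomial absorption -/
lemma aux_pow_le_exp (n : ℕ) {c : ℝ} (hc : 0 < c) :
    ∃ K : ℝ, 0 ≤ K ∧ ∀ x : ℝ, 0 ≤ x → (1 + x) ^ n ≤ K * Real.exp (c * x) := by
  refine ⟨n.factorial * Real.exp c / c ^ n, by positivity, fun x hx => ?_⟩
  have h1 : (c * (1 + x)) ^ n / n.factorial ≤ Real.exp (c * (1 + x)) :=
    Real.pow_div_factorial_le_exp (x := c * (1 + x)) (by positivity) n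
  have h2 : (c * (1 + x)) ^ n = c ^ n * (1 + x) ^ n := mul_pow _ _ _
  have h3 : Real.exp (c * (1 + x)) = Real.exp c * Real.exp (c * x) := by
    rw [← Real.exp_add]; ring_nf
  rw [h2, h3, div_le_iff₀ (by positivity)] at h1
  rw [div_mul_eq_mul_div, le_div_iff₀ (by positivity)]
  nlinarith [Real.exp_pos (c * x), Real.exp_pos c, pow_pos hc n,
    pow_nonneg (by linarith : (0:ℝ) ≤ 1 + x) n]

lemma aux_commute (A : Matrix (Fin p) (Fin p) ℂ) (a b : ℂ) :
    Commute (A - a • 1) (A - b • 1) := by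
  have h1 : Commute A (b • (1 : Matrix (Fin p) (Fin p) ℂ)) := (Commute.one_right A).smul_right b
  have h2 : Commute (a • (1 : Matrix (Fin p) (Fin p) ℂ)) A := ((Commute.one_left A).smul_left a)
  exact ((Commute.refl A).sub_right h1).sub_left
    (h2.sub_right (((Commute.one_left _).smul_left a).smul_right b))

/-- the mulVec-by-fixed-vector continuous linear map -/
noncomputable def mulVecCLM (v : Fin p → ℂ) :
    Matrix (Fin p) (Fin p) ℂ →L[ℝ] (Fin p → ℂ) :=
  LinearMap.toContinuousLinearMap
    { toFun := fun B => B *ᵥ v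
      map_add' := fun B C => Matrix.add_mulVec B C v
      map_smul' := fun c B => Matrix.smul_mulVec c B v }

lemma mulVecCLM_apply (v : Fin p → ℂ) (B : Matrix (Fin p) (Fin p) ℂ) :
    mulVecCLM v B = B *ᵥ v := rfl

lemma hasDerivAt_expMulVec (A : Matrix (Fin p) (Fin p) ℂ) (v : Fin p → ℂ) (x : ℝ) :
    HasDerivAt (fun u : ℝ => exp (u • A) *ᵥ v) ((A * exp (x • A)) *ᵥ v) x := by
  have h := (mulVecCLM v).hasFDerivAt.comp_hasDerivAt x (hasDerivAt_exp_smul_const' A x)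
  exact h

lemma decay_aux (A : Matrix (Fin p) (Fin p) ℂ) {δ : ℝ} (hδ : 0 < δ) :
    ∀ (l : List ℂ), (∀ μ ∈ l, μ.re ≤ -δ) → ∀ (v : Fin p → ℂ),
      (l.map (fun μ => A - μ • 1)).prod *ᵥ v = 0 →
      ∃ C : ℝ, 0 ≤ C ∧ ∀ x : ℝ, 0 ≤ x →
        ‖exp (x • A) *ᵥ v‖ ≤ C * (1 + x) ^ l.length * Real.exp (-δ * x) := by
  intro l
  induction l with
  | nil =>
    intro _ v hv
    simp only [List.map_nil, List.prod_nil, Matrix.one_mulVec] at hv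
    exact ⟨0, le_rfl, fun x hx => by simp [hv, Matrix.mulVec_zero]⟩
  | cons μ l ih =>
    intro hl v hv
    have hμ : μ.re ≤ -δ := hl μ (List.mem_cons_self)
    set n := l.length with hn
    set w : Fin p → ℂ := (A - μ • 1) *ᵥ v with hw
    have hcomm : Commute (A - μ • 1) ((l.map (fun b => A - b • 1)).prod) :=
      Commute.list_prod_right _ _ (fun B hB => by
        obtain ⟨b, hb, rfl⟩ := List.mem_map.mp hB
        exact aux_commute A μ b)
    have hvw : (l.map (fun b => A - b • 1)).prod *ᵥ w = 0 := by
      rw [hw, Matrix.mulVec_mulVec, ← hcomm.eq]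
      simpa using hv
    obtain ⟨C, hC0, hC⟩ := ih (fun b hb => hl b (List.mem_cons_of_mem _ hb)) w hvw
    refine ⟨‖v‖ + C, by positivity, fun x hx => ?_⟩
    set G : ℝ → (Fin p → ℂ) := fun y => exp (y • A) *ᵥ v with hG
    set g : ℝ → (Fin p → ℂ) := fun y => Complex.exp (-(μ * y)) • (exp (y • A) *ᵥ w) with hg
    set u : ℝ → (Fin p → ℂ) := fun y => Complex.exp (-(μ * y)) • G y with hu
    have hsc : ∀ y : ℝ, HasDerivAt (fun z : ℝ => Complex.exp (-(μ * z)))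
        (Complex.exp (-(μ * y)) * -μ) y := by
      intro y
      have h0 : HasDerivAt (fun z : ℝ => -(μ * (z : ℂ))) (-μ) y := by
        exact (((Complex.ofRealCLM.hasDerivAt (x := y)).const_mul μ).neg).congr_deriv (by simp)
      exact h0.cexp
    have hud : ∀ y : ℝ, HasDerivAt u (g y) y := by
      intro y
      have h3 := (hsc y).smul (hasDerivAt_expMulVec A v y)
      refine h3.congr_deriv (Eq.symm ?_)
      have hce : Commute (A - μ • 1) (exp (y • A)) := by
        have h4 : Commute (A - μ • 1) (y • A) :=
          (((Commute.refl A).sub_left ((Commute.one_left A).smul_left μ))).smul_right y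
        exact h4.exp_right
      have key : exp (y • A) *ᵥ w = (A * exp (y • A)) *ᵥ v
          - μ • (exp (y • A) *ᵥ v) := by
        rw [hw, Matrix.mulVec_mulVec, ← hce.eq, Matrix.sub_mul, Matrix.sub_mulVec]
        congr 1
        rw [smul_mul_assoc, one_mul, Matrix.smul_mulVec]
      show Complex.exp (-(μ * y)) • (exp (y • A) *ᵥ w) = _
      rw [key, smul_sub, smul_smul]
      module
    have hGcont : Continuous G := by
      have h5 : Differentiable ℝ G := fun y => (hasDerivAt_expMulVec A v y).differentiableAt
      exact h5.continuous
    have hwcont : Continuous (fun y : ℝ => exp (y • A) *ᵥ w) := by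
      have h5 : Differentiable ℝ (fun y : ℝ => exp (y • A) *ᵥ w) :=
        fun y => (hasDerivAt_expMulVec A w y).differentiableAt
      exact h5.continuous
    have hsccont : Continuous fun y : ℝ => Complex.exp (-(μ * y)) :=
      Complex.continuous_exp.comp ((continuous_const.mul Complex.continuous_ofReal).neg)
    have hgcont : Continuous g := hsccont.smul hwcont
    have hFTC : ∫ y in (0:ℝ)..x, g y = u x - u 0 :=
      intervalIntegral.integral_eq_sub_of_hasDerivAt (fun y _ => hud y)
        (hgcont.intervalIntegrable 0 x)
    have hu0 : u 0 = v := by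
      simp [hu, hG, exp_zero, Matrix.one_mulVec]
    have hux : u x = v + ∫ y in (0:ℝ)..x, g y := by
      rw [hFTC, hu0]; abel
    set cx : ℝ := C * (1 + x) ^ n * Real.exp ((-μ.re - δ) * x) with hcx
    have hbd : ∀ y ∈ Set.Icc (0:ℝ) x, ‖g y‖ ≤ cx := by
      intro y hy
      obtain ⟨hy0, hyx⟩ := hy
      have h1 : ‖g y‖ = Real.exp (-(μ.re * y)) * ‖exp (y • A) *ᵥ w‖ := by
        rw [hg, norm_smul]
        congr 1
        simp [Complex.norm_exp]
      rw [h1]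
      have h2 : Real.exp (-(μ.re * y)) * ‖exp (y • A) *ᵥ w‖
          ≤ Real.exp (-(μ.re * y)) * (C * (1 + y) ^ n * Real.exp (-δ * y)) :=
        mul_le_mul_of_nonneg_left (hC y hy0) (Real.exp_pos _).le
      refine h2.trans ?_
      have h3 : Real.exp (-(μ.re * y)) * (C * (1 + y) ^ n * Real.exp (-δ * y))
          = C * (1 + y) ^ n * Real.exp ((-μ.re - δ) * y) := by
        rw [show ((-μ.re - δ) * y) = (-(μ.re * y)) + (-δ * y) by ring, Real.exp_add]; ring
      rw [h3, hcx]
      have h4 : (1 + y) ^ n ≤ (1 + x) ^ n := by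
        apply pow_le_pow_left₀ (by linarith) (by linarith)
      have h5 : Real.exp ((-μ.re - δ) * y) ≤ Real.exp ((-μ.re - δ) * x) := by
        apply Real.exp_le_exp.mpr
        apply mul_le_mul_of_nonneg_left hyx (by linarith)
      calc C * (1 + y) ^ n * Real.exp ((-μ.re - δ) * y)
          ≤ C * (1 + x) ^ n * Real.exp ((-μ.re - δ) * y) := by
            apply mul_le_mul_of_nonneg_right _ (Real.exp_pos _).le
            exact mul_le_mul_of_nonneg_left h4 hC0
        _ ≤ C * (1 + x) ^ n * Real.exp ((-μ.re - δ) * x) := by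
            apply mul_le_mul_of_nonneg_left h5 (by positivity)
    have hIbd : ‖∫ y in (0:ℝ)..x, g y‖ ≤ x * cx := by
      refine le_trans (intervalIntegral.norm_integral_le_integral_norm hx) ?_
      have h6 := intervalIntegral.integral_mono_on hx (hgcont.norm.intervalIntegrable 0 x)
        (intervalIntegrable_const : IntervalIntegrable (fun _ => cx) volume 0 x) hbd
      rw [intervalIntegral.integral_const, smul_eq_mul, sub_zero] at h6
      calc ∫ y in (0:ℝ)..x, ‖g y‖ ≤ x * cx := h6
        _ = x * cx := rfl
    have hux_norm : ‖u x‖ ≤ ‖v‖ + x * cx := by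
      rw [hux]
      exact (norm_add_le _ _).trans (add_le_add le_rfl hIbd)
    have hGx : G x = Complex.exp (μ * x) • u x := by
      rw [hu]
      show G x = Complex.exp (μ * x) • (Complex.exp (-(μ * x)) • G x)
      rw [smul_smul, ← Complex.exp_add]
      simp
    have hGnorm : ‖G x‖ = Real.exp (μ.re * x) * ‖u x‖ := by
      rw [hGx, norm_smul]
      congr 1
      simp [Complex.norm_exp]
    have hexp1 : Real.exp (μ.re * x) * Real.exp ((-μ.re - δ) * x) = Real.exp (-δ * x) := by
      rw [← Real.exp_add]; ring_nf
    have hexp2 : Real.exp (μ.re * x) ≤ Real.exp (-δ * x) := by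
      apply Real.exp_le_exp.mpr
      apply mul_le_mul_of_nonneg_right hμ hx
    have hpow1 : x * (1 + x) ^ n ≤ (1 + x) ^ (n + 1) := by
      rw [pow_succ]
      calc x * (1 + x) ^ n = (1 + x) ^ n * x := by ring
        _ ≤ (1 + x) ^ n * (1 + x) := by
            apply mul_le_mul_of_nonneg_left (by linarith) (by positivity)
    have hpow2 : (1 : ℝ) ≤ (1 + x) ^ (n + 1) := one_le_pow₀ (by linarith)
    show ‖G x‖ ≤ (‖v‖ + C) * (1 + x) ^ (List.length (μ :: l)) * Real.exp (-δ * x)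
    rw [List.length_cons]
    calc ‖G x‖ = Real.exp (μ.re * x) * ‖u x‖ := hGnorm
      _ ≤ Real.exp (μ.re * x) * (‖v‖ + x * cx) :=
          mul_le_mul_of_nonneg_left hux_norm (Real.exp_pos _).le
      _ = ‖v‖ * Real.exp (μ.re * x)
          + C * (x * (1 + x) ^ n) * (Real.exp (μ.re * x) * Real.exp ((-μ.re - δ) * x)) := by
          rw [hcx]; ring
      _ = ‖v‖ * Real.exp (μ.re * x) + C * (x * (1 + x) ^ n) * Real.exp (-δ * x) := by
          rw [hexp1]
      _ ≤ ‖v‖ * ((1 + x) ^ (n + 1) * Real.exp (-δ * x))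
          + C * ((1 + x) ^ (n + 1)) * Real.exp (-δ * x) := by
          apply add_le_add
          · apply mul_le_mul_of_nonneg_left _ (norm_nonneg v)
            calc Real.exp (μ.re * x) ≤ Real.exp (-δ * x) := hexp2
              _ = 1 * Real.exp (-δ * x) := (one_mul _).symm
              _ ≤ (1 + x) ^ (n + 1) * Real.exp (-δ * x) :=
                  mul_le_mul_of_nonneg_right hpow2 (Real.exp_pos _).le
          · apply mul_le_mul_of_nonneg_right _ (Real.exp_pos _).le
            exact mul_le_mul_of_nonneg_left hpow1 hC0
      _ = (‖v‖ + C) * (1 + x) ^ (n + 1) * Real.exp (-δ * x) := by ring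

lemma exists_delta : ∀ (l : List ℂ), (∀ μ ∈ l, μ.re < 0) →
    ∃ δ : ℝ, 0 < δ ∧ ∀ μ ∈ l, μ.re ≤ -δ := by
  intro l
  induction l with
  | nil => exact fun _ => ⟨1, one_pos, by simp⟩
  | cons a t ih =>
    intro h
    obtain ⟨δ, hδ, h2⟩ := ih (fun μ hμ => h μ (List.mem_cons_of_mem _ hμ))
    have ha : a.re < 0 := h a (List.mem_cons_self)
    refine ⟨min δ (-a.re), lt_min hδ (by linarith), fun μ hμ => ?_⟩
    rcases List.mem_cons.mp hμ with rfl | hμ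
    · have : min δ (-μ.re) ≤ -μ.re := min_le_right _ _
      linarith
    · have : min δ (-a.re) ≤ δ := min_le_left _ _
      linarith [h2 μ hμ]

lemma prod_roots_zero (A : Matrix (Fin p) (Fin p) ℂ) :
    ((A.charpoly.roots.toList).map (fun μ => A - μ • 1)).prod = 0 := by
  have hsplit : A.charpoly
      = (A.charpoly.roots.map (fun a => Polynomial.X - Polynomial.C a)).prod :=
    (IsAlgClosed.splits _).eq_prod_roots_of_monic A.charpoly_monic
  have h0 := Matrix.aeval_self_charpoly A
  rw [hsplit] at h0
  rw [← Multiset.coe_toList A.charpoly.roots, Multiset.map_coe, Multiset.prod_coe] at h0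
  rw [map_list_prod (Polynomial.aeval A), List.map_map] at h0
  rw [show ((Polynomial.aeval A) ∘ fun a => Polynomial.X - Polynomial.C a)
      = fun μ : ℂ => A - μ • 1 by
    funext μ
    simp [Function.comp, map_sub, Polynomial.aeval_X, Polynomial.aeval_C,
      Algebra.algebraMap_eq_smul_one]] at h0
  exact h0

lemma root_re_neg (T : Matrix (Fin p) (Fin p) ℝ)
    (hoff : ∀ i j, i ≠ j → 0 ≤ T i j) (hdiag : ∀ i, T i i < 0)
    (hrow : ∀ i, ∑ j, T i j ≤ 0) (hinv : IsUnit T.det)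
    {μ : ℂ} (hμ : μ ∈ (T.map (algebraMap ℝ ℂ)).charpoly.roots) : μ.re < 0 := by
  set A : Matrix (Fin p) (Fin p) ℂ := T.map (algebraMap ℝ ℂ) with hA
  have hdet : A.det ≠ 0 := by
    have h := RingHom.map_det (algebraMap ℝ ℂ) T
    rw [RingHom.mapMatrix_apply] at h
    rw [hA, ← h]
    simpa using hinv.ne_zero
  have hμ0 : μ ≠ 0 := by
    intro h
    rw [Matrix.det_eq_prod_roots_charpoly] at hdet
    exact hdet (Multiset.prod_eq_zero (h ▸ hμ))
  have hroot : A.charpoly.IsRoot μ := (Polynomial.mem_roots'.mp hμ).2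
  -- det (μ • 1 - A) = 0
  have hdet0 : (μ • (1 : Matrix (Fin p) (Fin p) ℂ) - A).det = 0 := by
    have h1 : ((Matrix.charmatrix A).map (Polynomial.eval μ)).det
        = Polynomial.eval μ A.charpoly := by
      rw [Matrix.charpoly]
      have h := RingHom.map_det (Polynomial.evalRingHom μ) (Matrix.charmatrix A)
      rw [RingHom.mapMatrix_apply] at h
      simp only [Polynomial.coe_evalRingHom] at h
      exact h.symm
    have h2 : (Matrix.charmatrix A).map (Polynomial.eval μ)
        = μ • (1 : Matrix (Fin p) (Fin p) ℂ) - A := by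
      ext i j
      by_cases hij : i = j
      · subst hij
        simp [Matrix.charmatrix_apply_eq, Matrix.one_apply]
      · simp [Matrix.charmatrix_apply_ne _ _ _ hij, Matrix.one_apply, hij]
    rw [h2] at h1
    rw [h1]
    exact hroot
  -- eigenvalue
  have hker : ⊥ < LinearMap.ker (Matrix.toLin' (μ • (1 : Matrix (Fin p) (Fin p) ℂ) - A)) := by
    apply LinearMap.bot_lt_ker_of_det_eq_zero
    rw [LinearMap.det_toLin']
    exact hdet0
  obtain ⟨v, hv, hv0⟩ := SetLike.exists_of_lt hker
  have hv0' : v ≠ 0 := by simpa using hv0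
  have hAv : A *ᵥ v = μ • v := by
    have h3 : μ • v - A *ᵥ v = 0 := by
      simpa [Matrix.toLin'_apply, Matrix.sub_mulVec, Matrix.smul_mulVec,
        Matrix.one_mulVec] using hv
    exact (sub_eq_zero.mp h3).symm
  have hEig : Module.End.HasEigenvalue (Matrix.toLin' A) μ :=
    Module.End.hasEigenvalue_of_hasEigenvector
      ⟨Module.End.mem_eigenspace_iff.mpr (by simpa [Matrix.toLin'_apply] using hAv), hv0'⟩
  obtain ⟨k, hk⟩ := eigenvalue_mem_ball hEig
  -- Gershgorin arithmetic
  have hAkk : A k k = ((T k k : ℝ) : ℂ) := by simp [hA]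
  have hsum : ∑ j ∈ Finset.univ.erase k, ‖A k j‖ ≤ -T k k := by
    have h5 : ∀ j ∈ Finset.univ.erase k, ‖A k j‖ = T k j := by
      intro j hj
      have hjk : j ≠ k := Finset.ne_of_mem_erase hj
      have : (0:ℝ) ≤ T k j := hoff k j (Ne.symm hjk)
      simp [hA, Complex.norm_real, Real.norm_eq_abs, abs_of_nonneg this]
    rw [Finset.sum_congr rfl h5]
    have h6 : ∑ j ∈ Finset.univ.erase k, T k j = (∑ j, T k j) - T k k :=
      Finset.sum_erase_eq_sub (Finset.mem_univ k)
    rw [h6]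
    linarith [hrow k]
  have hdist : ‖μ - (T k k : ℂ)‖ ≤ -T k k := by
    have := Metric.mem_closedBall.mp hk
    rw [hAkk] at this
    calc ‖μ - (T k k : ℂ)‖ = dist μ ((T k k : ℝ) : ℂ) := by
          rw [Complex.dist_eq]
      _ ≤ _ := le_trans this hsum
  -- conclude
  by_contra hre
  push_neg at hre
  have hsq : (‖μ - (T k k : ℂ)‖)^2 ≤ (T k k)^2 := by
    have h7 : (0:ℝ) ≤ ‖μ - (T k k : ℂ)‖ := norm_nonneg _
    nlinarith
  rw [Complex.sq_norm, Complex.normSq_apply] at hsq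
  simp only [Complex.sub_re, Complex.sub_im, Complex.ofReal_re, Complex.ofReal_im,
    sub_zero] at hsq
  have hkk := hdiag k
  have him : μ.im = 0 := by nlinarith
  have hre0 : μ.re = 0 := by nlinarith
  exact hμ0 (Complex.ext hre0 him)

lemma matExpEq (A : Matrix (Fin p) (Fin p) ℝ) : matExp A = exp A := by
  rw [exp_eq_tsum ℝ]; rfl

lemma exp_map_comm (B : Matrix (Fin p) (Fin p) ℝ) :
    exp (B.map (algebraMap ℝ ℂ)) = (exp B).map (algebraMap ℝ ℂ) := by
  have hφ := LinearMap.continuous_of_finiteDimensional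
    ((Algebra.ofId ℝ ℂ).mapMatrix.toLinearMap :
      Matrix (Fin p) (Fin p) ℝ →ₗ[ℝ] Matrix (Fin p) (Fin p) ℂ)
  have h := map_exp ((Algebra.ofId ℝ ℂ).mapMatrix :
      Matrix (Fin p) (Fin p) ℝ →ₐ[ℝ] Matrix (Fin p) (Fin p) ℂ) hφ B
  simp only [AlgHom.mapMatrix_apply] at h
  have : (Algebra.ofId ℝ ℂ) = (algebraMap ℝ ℂ) := rfl
  rw [← this]
  exact h.symm

lemma smul_map_comm (x : ℝ) (T : Matrix (Fin p) (Fin p) ℝ) :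
    (x • T).map (algebraMap ℝ ℂ) = x • (T.map (algebraMap ℝ ℂ)) := by
  ext i j
  simp [Matrix.map_apply, Complex.real_smul, Complex.ofReal_mul]

lemma matExp_decay (T : Matrix (Fin p) (Fin p) ℝ)
    (hoff : ∀ i j, i ≠ j → 0 ≤ T i j) (hdiag : ∀ i, T i i < 0)
    (hrow : ∀ i, ∑ j, T i j ≤ 0) (hinv : IsUnit T.det) :
    ∃ C δ : ℝ, 0 < δ ∧ 0 ≤ C ∧ ∀ x : ℝ, 0 ≤ x → ∀ i j,
      |matExp (x • T) i j| ≤ C * Real.exp (-δ * x) := by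
  set A : Matrix (Fin p) (Fin p) ℂ := T.map (algebraMap ℝ ℂ) with hA
  set l : List ℂ := A.charpoly.roots.toList with hl
  have hneg : ∀ μ ∈ l, μ.re < 0 := fun μ hμ =>
    root_re_neg T hoff hdiag hrow hinv (by rwa [← Multiset.mem_toList])
  obtain ⟨δ, hδ, hle⟩ := exists_delta l hneg
  have hdecay : ∀ j : Fin p, ∃ C, 0 ≤ C ∧ ∀ x : ℝ, 0 ≤ x →
      ‖exp (x • A) *ᵥ Pi.single j 1‖ ≤ C * (1 + x) ^ l.length * Real.exp (-δ * x) :=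
    fun j => decay_aux A hδ l hle _ (by rw [hl, prod_roots_zero]; exact Matrix.zero_mulVec _)
  choose Cf hCf0 hCf using hdecay
  obtain ⟨K, hK0, hK⟩ := aux_pow_le_exp l.length (half_pos hδ)
  refine ⟨K * (∑ j, Cf j), δ / 2, half_pos hδ, mul_nonneg hK0 (Finset.sum_nonneg fun j _ => hCf0 j), fun x hx i j => ?_⟩
  have hent : ((matExp (x • T)).map (algebraMap ℝ ℂ)) = exp (x • A) := by
    rw [matExpEq, ← exp_map_comm, smul_map_comm]
  have hval : |matExp (x • T) i j| = ‖exp (x • A) i j‖ := by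
    rw [← hent]
    simp [Matrix.map_apply, Complex.norm_real, Real.norm_eq_abs]
  have hsingle : (exp (x • A) *ᵥ Pi.single j 1) i = exp (x • A) i j := by
    simp [Matrix.mulVec, dotProduct, Pi.single_apply]
  have h1 : ‖exp (x • A) i j‖ ≤ ‖exp (x • A) *ᵥ Pi.single j 1‖ := by
    rw [← hsingle]
    exact norm_le_pi_norm _ i
  have h2 := hCf j x hx
  have h3 : (1 + x) ^ l.length * Real.exp (-δ * x) ≤ K * Real.exp (-(δ/2) * x) := by
    calc (1 + x) ^ l.length * Real.exp (-δ * x)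
        ≤ (K * Real.exp ((δ/2) * x)) * Real.exp (-δ * x) :=
          mul_le_mul_of_nonneg_right (hK x hx) (Real.exp_pos _).le
      _ = K * Real.exp (-(δ/2) * x) := by
          rw [mul_assoc, ← Real.exp_add]; ring_nf
  have h4 : Cf j ≤ ∑ j', Cf j' := Finset.single_le_sum (fun j' _ => hCf0 j') (Finset.mem_univ j)
  calc |matExp (x • T) i j| = ‖exp (x • A) i j‖ := hval
    _ ≤ ‖exp (x • A) *ᵥ Pi.single j 1‖ := h1
    _ ≤ Cf j * (1 + x) ^ l.length * Real.exp (-δ * x) := h2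
    _ = Cf j * ((1 + x) ^ l.length * Real.exp (-δ * x)) := by ring
    _ ≤ Cf j * (K * Real.exp (-(δ/2) * x)) :=
        mul_le_mul_of_nonneg_left h3 (hCf0 j)
    _ ≤ (∑ j', Cf j') * (K * Real.exp (-(δ/2) * x)) :=
        mul_le_mul_of_nonneg_right h4 (by positivity)
    _ = K * (∑ j', Cf j') * Real.exp (-(δ/2) * x) := by ring
    _ = K * (∑ j', Cf j') * Real.exp (-(δ/2) * x) := rfl

noncomputable def obsCLM (π v : Fin p → ℝ) : Matrix (Fin p) (Fin p) ℝ →L[ℝ] ℝ :=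
  LinearMap.toContinuousLinearMap
    { toFun := fun B => π ⬝ᵥ (B *ᵥ v)
      map_add' := fun B C => by simp [Matrix.add_mulVec, dotProduct_add]
      map_smul' := fun c B => by simp [Matrix.smul_mulVec, dotProduct_smul] }

lemma obsCLM_apply (π v : Fin p → ℝ) (B : Matrix (Fin p) (Fin p) ℝ) :
    obsCLM π v B = π ⬝ᵥ (B *ᵥ v) := rfl

lemma hasDerivAt_obs (T : Matrix (Fin p) (Fin p) ℝ) (π v : Fin p → ℝ) (x : ℝ) :
    HasDerivAt (fun y : ℝ => π ⬝ᵥ (matExp (y • T) *ᵥ v))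
      (π ⬝ᵥ ((T * matExp (x • T)) *ᵥ v)) x := by
  have h1 := (obsCLM π v).hasFDerivAt.comp_hasDerivAt x (hasDerivAt_exp_smul_const' T x)
  simp only [matExpEq]
  exact h1

lemma continuous_obs (T : Matrix (Fin p) (Fin p) ℝ) (π v : Fin p → ℝ) :
    Continuous (fun y : ℝ => π ⬝ᵥ (matExp (y • T) *ᵥ v)) := by
  have h : Differentiable ℝ (fun y : ℝ => π ⬝ᵥ (matExp (y • T) *ᵥ v)) :=
    fun y => (hasDerivAt_obs T π v y).differentiableAt
  exact h.continuous

lemma dot_bound (π v : Fin p → ℝ) (E : Matrix (Fin p) (Fin p) ℝ) {C : ℝ}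
    (hC : ∀ i j, |E i j| ≤ C) :
    |π ⬝ᵥ (E *ᵥ v)| ≤ (∑ i, |π i|) * (∑ j, |v j|) * C := by
  rcases Nat.eq_zero_or_pos p with hp | hp
  · subst hp
    simp [dotProduct]
  have hC0 : 0 ≤ C := le_trans (abs_nonneg _) (hC ⟨0, hp⟩ ⟨0, hp⟩)
  calc |π ⬝ᵥ (E *ᵥ v)| = |∑ i, π i * (∑ j, E i j * v j)| := by
        simp [dotProduct, Matrix.mulVec]
    _ ≤ ∑ i, |π i * (∑ j, E i j * v j)| := Finset.abs_sum_le_sum_abs _ _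
    _ ≤ ∑ i, |π i| * (∑ j, C * |v j|) := by
        apply Finset.sum_le_sum
        intro i _
        rw [abs_mul]
        apply mul_le_mul_of_nonneg_left _ (abs_nonneg _)
        calc |∑ j, E i j * v j| ≤ ∑ j, |E i j * v j| := Finset.abs_sum_le_sum_abs _ _
          _ ≤ ∑ j, C * |v j| := by
              apply Finset.sum_le_sum
              intro j _
              rw [abs_mul]
              exact mul_le_mul_of_nonneg_right (hC i j) (abs_nonneg _)
    _ = (∑ i, |π i|) * (∑ j, |v j|) * C := by
        rw [← Finset.sum_mul, ← Finset.mul_sum]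
        ring

lemma integrableOn_rpow_mul_decay {a δ C : ℝ} (ha : -1 < a) (hδ : 0 < δ) {F : ℝ → ℝ}
    (hF : Continuous F) (hbd : ∀ x, 0 ≤ x → |F x| ≤ C * Real.exp (-δ * x)) :
    IntegrableOn (fun x => x ^ a * F x) (Set.Ioi (0:ℝ)) := by
  have hC0 : 0 ≤ C := by
    have h1 := hbd 0 le_rfl
    simp only [mul_zero, neg_zero, Real.exp_zero, mul_one] at h1
    exact le_trans (abs_nonneg _) h1
  have hmaj : IntegrableOn (fun x => C * (x ^ a * Real.exp (-δ * x))) (Set.Ioi (0:ℝ)) := by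
    have h := integrableOn_rpow_mul_exp_neg_mul_rpow ha zero_lt_one hδ
    simp only [Real.rpow_one] at h
    exact h.const_mul C
  refine MeasureTheory.Integrable.mono hmaj ?_ ?_
  · apply ContinuousOn.aestronglyMeasurable _ measurableSet_Ioi
    apply ContinuousOn.mul _ hF.continuousOn
    intro x hx
    exact (Real.continuousAt_rpow_const x a (Or.inl (ne_of_gt hx))).continuousWithinAt
  · filter_upwards [ae_restrict_mem measurableSet_Ioi] with x hx
    have hx0 : (0:ℝ) < x := hx
    have hxa : (0:ℝ) ≤ x ^ a := Real.rpow_nonneg hx0.le a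
    rw [Real.norm_eq_abs, Real.norm_eq_abs, abs_mul, abs_of_nonneg hxa]
    have h2 : x ^ a * |F x| ≤ x ^ a * (C * Real.exp (-δ * x)) :=
      mul_le_mul_of_nonneg_left (hbd x hx0.le) hxa
    refine h2.trans ?_
    rw [abs_of_nonneg (by positivity)]
    ring_nf
    exact le_rfl

noncomputable def entryCLM (i j : Fin p) : Matrix (Fin p) (Fin p) ℝ →L[ℝ] ℝ :=
  LinearMap.toContinuousLinearMap
    { toFun := fun B => B i j
      map_add' := fun B C => rfl
      map_smul' := fun c B => rfl }

lemma continuous_entry (T : Matrix (Fin p) (Fin p) ℝ) (i j : Fin p) :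
    Continuous (fun y : ℝ => matExp (y • T) i j) := by
  have h : Differentiable ℝ (fun y : ℝ => exp (y • T)) :=
    fun y => (hasDerivAt_exp_smul_const' T y).differentiableAt
  have h2 : Continuous (fun y : ℝ => entryCLM i j (exp (y • T))) :=
    (entryCLM i j).continuous.comp h.continuous
  simp only [matExpEq]
  exact h2

theorem ph_fractional_moment_aux (hp : 0 < p)
    (T : Matrix (Fin p) (Fin p) ℝ)
    (hoff : ∀ i j, i ≠ j → 0 ≤ T i j) (hdiag : ∀ i, T i i < 0)
    (hrow : ∀ i, ∑ j, T i j ≤ 0) (hinv : IsUnit T.det)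
    (π : Fin p → ℝ) (hπ : ∀ i, 0 ≤ π i) (hπ1 : ∑ i, π i = 1)
    (ν : ℝ) (hν : 0 < ν) :
    let t : Fin p → ℝ := -(T *ᵥ fun _ => 1)
    let M : Matrix (Fin p) (Fin p) ℝ := Matrix.of fun i j =>
      (Real.Gamma ν)⁻¹ * ∫ s in Set.Ioi (0 : ℝ), s ^ (ν - 1) * (matExp (s • T)) i j
    ∫ x in Set.Ioi (0 : ℝ), x ^ ν * (π ⬝ᵥ (matExp (x • T) *ᵥ t))
      = Real.Gamma (ν + 1) * (π ⬝ᵥ (M *ᵥ fun _ => 1)) := by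
  intro t M
  obtain ⟨C, δ, hδ, hC0, hdecC⟩ := matExp_decay T hoff hdiag hrow hinv
  set e1 : Fin p → ℝ := fun _ => (1:ℝ) with he1
  set h : ℝ → ℝ := fun x => π ⬝ᵥ (matExp (x • T) *ᵥ e1) with hh
  set f : ℝ → ℝ := fun x => π ⬝ᵥ (matExp (x • T) *ᵥ t) with hf
  set Ch : ℝ := (∑ i, |π i|) * (∑ j, |e1 j|) * C with hCh
  set Cf : ℝ := (∑ i, |π i|) * (∑ j, |t j|) * C with hCf
  have hhbd : ∀ x, 0 ≤ x → |h x| ≤ Ch * Real.exp (-δ * x) := by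
    intro x hx
    have h1 := dot_bound π e1 (matExp (x • T)) (fun i j => hdecC x hx i j)
    refine le_of_le_of_eq h1 ?_
    rw [hCh]; ring
  have hfbd : ∀ x, 0 ≤ x → |f x| ≤ Cf * Real.exp (-δ * x) := by
    intro x hx
    have h1 := dot_bound π t (matExp (x • T)) (fun i j => hdecC x hx i j)
    refine le_of_le_of_eq h1 ?_
    rw [hCf]; ring
  have hCh0 : 0 ≤ Ch := le_trans (abs_nonneg _) (by simpa using hhbd 0 le_rfl)
  have hint1 : IntegrableOn (fun x => x ^ (ν - 1) * h x) (Set.Ioi 0) :=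
    integrableOn_rpow_mul_decay (by linarith) hδ (continuous_obs T π e1) hhbd
  have hint2 : IntegrableOn (fun x => x ^ ν * f x) (Set.Ioi 0) :=
    integrableOn_rpow_mul_decay (by linarith) hδ (continuous_obs T π t) hfbd
  have hintE : ∀ i j, IntegrableOn (fun s => s ^ (ν - 1) * matExp (s • T) i j) (Set.Ioi 0) :=
    fun i j => integrableOn_rpow_mul_decay (by linarith) hδ (continuous_entry T i j)
      (fun x hx => hdecC x hx i j)
  -- derivative of h is -f
  have hhd : ∀ x : ℝ, HasDerivAt h (-(f x)) x := by
    intro x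
    have h1 := hasDerivAt_obs T π e1 x
    have hcomm : T * matExp (x • T) = matExp (x • T) * T := by
      simp only [matExpEq]
      exact (((Commute.refl T).smul_right x).exp_right).eq
    have ht : T *ᵥ e1 = -t := by
      show T *ᵥ e1 = -(-(T *ᵥ fun _ => 1))
      rw [neg_neg, he1]
    have h2 : π ⬝ᵥ ((T * matExp (x • T)) *ᵥ e1) = -(f x) := by
      rw [hcomm, ← Matrix.mulVec_mulVec, ht, Matrix.mulVec_neg, dotProduct_neg, hf]
    rw [← h2]
    exact h1
  -- FTC on Ioi 0
  have hu : ∀ x ∈ Set.Ioi (0:ℝ), HasDerivAt (fun y => y ^ ν * h y)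
      (ν * x ^ (ν - 1) * h x - x ^ ν * f x) x := by
    intro x hx
    have h1 : HasDerivAt (fun y : ℝ => y ^ ν) (ν * x ^ (ν - 1)) x := by
      have h0 := Real.hasDerivAt_rpow_const (x := x) (p := ν) (Or.inl (ne_of_gt hx))
      convert h0 using 1
      try ring
    have h2 := h1.mul (hhd x)
    refine h2.congr_deriv ?_
    ring
  have hucont : ContinuousWithinAt (fun y : ℝ => y ^ ν * h y) (Set.Ici 0) 0 := by
    apply ContinuousWithinAt.mul
    · exact (Real.continuousAt_rpow_const 0 ν (Or.inr hν.le)).continuousWithinAt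
    · exact (continuous_obs T π e1).continuousAt.continuousWithinAt
  have hderint : IntegrableOn (fun x => ν * x ^ (ν - 1) * h x - x ^ ν * f x) (Set.Ioi 0) := by
    apply Integrable.sub
    · have h3 := hint1.const_mul ν
      apply h3.congr
      exact Filter.EventuallyEq.of_eq (funext fun x => by ring)
    · exact hint2
  have hutend : Filter.Tendsto (fun y : ℝ => y ^ ν * h y) Filter.atTop (nhds 0) := by
    have h4 : Filter.Tendsto (fun x : ℝ => Ch * (x ^ ν * Real.exp (-δ * x)))
        Filter.atTop (nhds 0) := by
      simpa using (tendsto_rpow_mul_exp_neg_mul_atTop_nhds_zero ν δ hδ).const_mul Ch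
    apply squeeze_zero_norm' _ h4
    filter_upwards [Filter.eventually_ge_atTop (0:ℝ)] with x hx
    have hxa : (0:ℝ) ≤ x ^ ν := Real.rpow_nonneg hx ν
    rw [Real.norm_eq_abs, abs_mul, abs_of_nonneg hxa]
    calc x ^ ν * |h x| ≤ x ^ ν * (Ch * Real.exp (-δ * x)) :=
          mul_le_mul_of_nonneg_left (hhbd x hx) hxa
      _ = Ch * (x ^ ν * Real.exp (-δ * x)) := by ring
  have hFTC := integral_Ioi_of_hasDerivAt_of_tendsto hucont hu hderint hutend
  rw [Real.zero_rpow hν.ne', zero_mul, sub_zero] at hFTC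
  have key1 : ∫ x in Set.Ioi (0:ℝ), x ^ ν * f x
      = ν * ∫ x in Set.Ioi (0:ℝ), x ^ (ν - 1) * h x := by
    have h5 : ∫ x in Set.Ioi (0:ℝ), (ν * x ^ (ν - 1) * h x - x ^ ν * f x)
        = (∫ x in Set.Ioi (0:ℝ), ν * (x ^ (ν - 1) * h x))
          - ∫ x in Set.Ioi (0:ℝ), x ^ ν * f x := by
      rw [← integral_sub ((hint1.const_mul ν)) hint2]
      congr 1
      funext x
      ring
    rw [h5] at hFTC
    rw [MeasureTheory.integral_const_mul] at hFTC
    linarith [hFTC]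
  -- RHS computation
  have hGamma_pos := Real.Gamma_pos_of_pos hν
  have hM : π ⬝ᵥ (M *ᵥ e1) = (Real.Gamma ν)⁻¹ * ∫ s in Set.Ioi (0:ℝ), s ^ (ν - 1) * h s := by
    have hInt : ∀ (i j : Fin p), Integrable (fun s => π i * (s ^ (ν - 1) * matExp (s • T) i j))
        (volume.restrict (Set.Ioi 0)) := fun i j => (hintE i j).const_mul (π i)
    have hstep1 : π ⬝ᵥ (M *ᵥ e1)
        = ∑ i, ∑ j, π i * ((Real.Gamma ν)⁻¹
            * ∫ s in Set.Ioi (0:ℝ), s ^ (ν - 1) * matExp (s • T) i j) := by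
      simp only [dotProduct, Matrix.mulVec, he1, mul_one, M, Matrix.of_apply]
      simp [Finset.mul_sum]
    have hstep2 : ∑ i, ∑ j, π i * ((Real.Gamma ν)⁻¹
            * ∫ s in Set.Ioi (0:ℝ), s ^ (ν - 1) * matExp (s • T) i j)
        = (Real.Gamma ν)⁻¹ * ∑ i, ∑ j,
            ∫ s in Set.Ioi (0:ℝ), π i * (s ^ (ν - 1) * matExp (s • T) i j) := by
      rw [Finset.mul_sum]
      refine Finset.sum_congr rfl fun i _ => ?_
      rw [Finset.mul_sum]
      refine Finset.sum_congr rfl fun j _ => ?_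
      rw [MeasureTheory.integral_const_mul]
      ring
    have hstep3 : ∑ i, ∑ j, ∫ s in Set.Ioi (0:ℝ), π i * (s ^ (ν - 1) * matExp (s • T) i j)
        = ∫ s in Set.Ioi (0:ℝ), ∑ i, ∑ j, π i * (s ^ (ν - 1) * matExp (s • T) i j) := by
      calc ∑ i, ∑ j, ∫ s in Set.Ioi (0:ℝ), π i * (s ^ (ν - 1) * matExp (s • T) i j)
          = ∑ i, ∫ s in Set.Ioi (0:ℝ), ∑ j, π i * (s ^ (ν - 1) * matExp (s • T) i j) := by
            refine Finset.sum_congr rfl fun i _ => ?_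
            rw [← integral_finset_sum _ (fun j _ => hInt i j)]
        _ = _ := by
            rw [← integral_finset_sum _ (fun i _ =>
              integrable_finset_sum _ (fun j _ => hInt i j))]
    have hstep4 : ∀ s : ℝ, (∑ i, ∑ j, π i * (s ^ (ν - 1) * matExp (s • T) i j))
        = s ^ (ν - 1) * h s := by
      intro s
      rw [hh]
      simp only [dotProduct, Matrix.mulVec, he1, mul_one]
      rw [Finset.mul_sum]
      refine Finset.sum_congr rfl fun i _ => ?_
      rw [Finset.mul_sum, Finset.mul_sum]
      refine Finset.sum_congr rfl fun j _ => ?_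
      ring
    rw [hstep1, hstep2, hstep3]
    congr 1
    refine integral_congr_ae (Filter.Eventually.of_forall fun s => hstep4 s)
  -- conclude
  calc ∫ x in Set.Ioi (0:ℝ), x ^ ν * f x
      = ν * ∫ x in Set.Ioi (0:ℝ), x ^ (ν - 1) * h x := key1
    _ = Real.Gamma (ν + 1) * (π ⬝ᵥ (M *ᵥ e1)) := by
        rw [hM, Real.Gamma_add_one hν.ne']
        field_simp


end Aux

/-- For `W ~ PH(π,T)` with density `π e^{Tx} t`, `t = -Te`, and `ν > 0`,
`E[W^ν] = Γ(ν+1) π (-T)^{-ν} e`, where `(-T)^{-ν} = Γ(ν)⁻¹ ∫_0^∞ s^{ν-1} e^{Ts} ds`. -/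
theorem ph_fractional_moment {p : ℕ} (hp : 0 < p)
    (T : Matrix (Fin p) (Fin p) ℝ)
    (hoff : ∀ i j, i ≠ j → 0 ≤ T i j) (hdiag : ∀ i, T i i < 0)
    (hrow : ∀ i, ∑ j, T i j ≤ 0) (hinv : IsUnit T.det)
    (π : Fin p → ℝ) (hπ : ∀ i, 0 ≤ π i) (hπ1 : ∑ i, π i = 1)
    (ν : ℝ) (hν : 0 < ν) :
    let t : Fin p → ℝ := -(T *ᵥ fun _ => 1)
    -- `(-T)^{-ν}` defined entrywise by the functional-calculus integral
    let M : Matrix (Fin p) (Fin p) ℝ := Matrix.of fun i j =>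
      (Real.Gamma ν)⁻¹ * ∫ s in Set.Ioi (0 : ℝ), s ^ (ν - 1) * (matExp (s • T)) i j
    ∫ x in Set.Ioi (0 : ℝ), x ^ ν * (π ⬝ᵥ (matExp (x • T) *ᵥ t))
      = Real.Gamma (ν + 1) * (π ⬝ᵥ (M *ᵥ fun _ => 1)) := by
  exact ph_fractional_moment_aux hp T hoff hdiag hrow hinv π hπ hπ1 ν hν
end

section
/- For 0 < α ≤ 1, β > 0, m ≥ 1 and x > 0, the identity (d^m/dx^m)[x^{β−1} E_{α,β}(x^α)] = x^{β−m−1} E_{α,β−m}(x^α) holds, where E_{α,γ}(z) = Σ_{k≥0} z^k/Γ(αk+γ) (with the convention 1/Γ(n) = 0 for nonpositive integers n). -/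
open Nat Real

/-- The scalar two-parameter Mittag-Leffler function `E_{α,γ}(z) = Σ_{k≥0} z^k / Γ(αk+γ)`,
with the convention `1/Γ(n) = 0` at nonpositive integers `n` (in Mathlib,
`Real.Gamma` vanishes there, and division by zero is zero). -/
noncomputable def scalarML (α β z : ℝ) : ℝ :=
  ∑' k : ℕ, z ^ k / Real.Gamma (α * k + β)


lemma pow_le_exp_mul_factorial {s : ℝ} (hs : 0 ≤ s) (n : ℕ) :
    s ^ n ≤ Real.exp s * n ! := by
  have h1 : s ^ n / n ! ≤ Real.exp s := by
    calc s ^ n / n ! ≤ ∑ i ∈ Finset.range (n+1), s ^ i / i !  := by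
          refine Finset.single_le_sum (f := fun i => s ^ i / i !) (fun i _ => by positivity) ?_
          simp
      _ ≤ Real.exp s := Real.sum_le_exp_of_nonneg hs (n+1)
  have hn : (0:ℝ) < n ! := by positivity
  calc s ^ n = s ^ n / n ! * n ! := by field_simp
    _ ≤ Real.exp s * n ! := by nlinarith [hn]

/-- Gamma lower bound: for `s ≥ 1` and `t ≥ 2`, `exp(-s) * s^(t-2) ≤ Γ(t)`. -/
lemma gamma_lower {s t : ℝ} (hs : 1 ≤ s) (ht : 2 ≤ t) :
    Real.exp (-s) * s ^ (t - 2) ≤ Real.Gamma t := by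
  set n : ℕ := ⌊t⌋₊ with hn
  have hn2 : 2 ≤ n := Nat.le_floor (by exact_mod_cast ht)
  have hnt : (n : ℝ) ≤ t := Nat.floor_le (by linarith)
  have htn : t < n + 1 := Nat.lt_floor_add_one t
  have h1 : Real.Gamma (n : ℝ) ≤ Real.Gamma t := by
    rcases eq_or_lt_of_le hnt with h | h
    · rw [h]
    · refine le_of_lt (Real.Gamma_strictMonoOn_Ici ?_ ?_ h)
      · simp only [Set.mem_Ici]; exact_mod_cast hn2
      · simp only [Set.mem_Ici]; linarith
  have h2 : Real.Gamma (n : ℝ) = (n - 1)! := by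
    have h : (n : ℝ) = ((n-1 : ℕ) : ℝ) + 1 := by
      have : 1 ≤ n := by omega
      push_cast [Nat.cast_sub this]; ring
    rw [h, Real.Gamma_nat_eq_factorial]
  have h3 : s ^ ((n:ℝ) - 1) ≤ Real.exp s * (n-1)! := by
    have hb := pow_le_exp_mul_factorial (le_trans zero_le_one hs) (n-1)
    have hcast : s ^ ((n:ℝ) - 1) = s ^ (n-1 : ℕ) := by
      rw [← Real.rpow_natCast s (n-1)]
      congr 1
      have : 1 ≤ n := by omega
      push_cast [Nat.cast_sub this]; ring
    rw [hcast]; exact hb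
  have h4 : s ^ (t - 2) ≤ s ^ ((n:ℝ) - 1) :=
    Real.rpow_le_rpow_of_exponent_le hs (by linarith)
  have hexp : (0:ℝ) < Real.exp (-s) := Real.exp_pos _
  calc Real.exp (-s) * s ^ (t-2) ≤ Real.exp (-s) * s ^ ((n:ℝ)-1) := by nlinarith
    _ ≤ Real.exp (-s) * (Real.exp s * (n-1)!) := by nlinarith
    _ = ((n-1)! : ℝ) := by rw [← mul_assoc, ← Real.exp_add]; simp
    _ = Real.Gamma (n:ℝ) := h2.symm
    _ ≤ Real.Gamma t := h1

/-- Core summability: `Σ r^k * |1/Γ(a k + c)|` converges for `a > 0`, `r ≥ 0`. -/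
lemma summable_pow_div_gamma {a : ℝ} (ha : 0 < a) (c : ℝ) {r : ℝ} (hr : 0 ≤ r) :
    Summable (fun k : ℕ => r ^ k * |1 / Real.Gamma (a * k + c)|) := by
  set s : ℝ := max 1 ((2*r+1) ^ (a⁻¹)) with hsdef
  have hs1 : 1 ≤ s := le_max_left _ _
  have hs0 : 0 < s := lt_of_lt_of_le one_pos hs1
  have hsa : 2*r + 1 ≤ s ^ a := by
    have h1 : ((2*r+1) ^ (a⁻¹)) ^ a = 2*r+1 :=
      Real.rpow_inv_rpow (by linarith) (ne_of_gt ha)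
    calc 2*r+1 = ((2*r+1) ^ (a⁻¹)) ^ a := h1.symm
      _ ≤ s ^ a := Real.rpow_le_rpow (Real.rpow_nonneg (by linarith) _)
          (le_max_right _ _) (le_of_lt ha)
  have hsa0 : (0:ℝ) < s ^ a := Real.rpow_pos_of_pos hs0 a
  -- choose K with a*K + c ≥ 2
  obtain ⟨K, hK⟩ := exists_nat_ge ((2 - c) / a)
  have hK2 : ∀ k : ℕ, K ≤ k → 2 ≤ a * k + c := by
    intro k hk
    have h1 : (2 - c) / a ≤ (k : ℝ) := le_trans hK (by exact_mod_cast hk)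
    have := (div_le_iff₀ ha).mp h1
    linarith
  rw [← summable_nat_add_iff K]
  have hbound : ∀ k : ℕ,
      r ^ (k + K) * |1 / Real.Gamma (a * ((k + K : ℕ) : ℝ) + c)|
        ≤ (Real.exp s * s ^ (2 - c) * s ^ (-(a*(K:ℝ))) * r ^ K) * (r / s ^ a) ^ k := by
    intro k
    push_cast
    have ht : 2 ≤ a * (k + K) + c := by
      have := hK2 (k + K) (by omega)
      exact_mod_cast this
    have hG : Real.exp (-s) * s ^ (a * (k+K) + c - 2) ≤ Real.Gamma (a * (k+K) + c) :=
      gamma_lower hs1 ht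
    have hGpos : 0 < Real.Gamma (a * (k+K) + c) :=
      lt_of_lt_of_le (by positivity) hG
    rw [abs_of_pos (by positivity)]
    have hEpos : 0 < Real.exp (-s) * s ^ (a * (↑k + ↑K) + c - 2) := by positivity
    have hsak : s ^ (-(a * (k:ℝ))) = ((s ^ a) ^ k)⁻¹ := by
      rw [Real.rpow_neg hs0.le, Real.rpow_mul hs0.le, Real.rpow_natCast]
    have hinv : 1 / Real.Gamma (a * (↑k + ↑K) + c)
        ≤ Real.exp s * (s ^ (2-c) * (s ^ (-(a*(K:ℝ))) * ((s^a)^k)⁻¹)) := by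
      have h1 : 1 / Real.Gamma (a * (↑k + ↑K) + c)
          ≤ 1 / (Real.exp (-s) * s ^ (a * (↑k + ↑K) + c - 2)) :=
        one_div_le_one_div_of_le hEpos hG
      refine h1.trans (le_of_eq ?_)
      rw [← hsak, one_div, mul_inv, ← Real.exp_neg, neg_neg, ← Real.rpow_neg hs0.le]
      rw [← Real.rpow_add hs0, ← Real.rpow_add hs0]
      congr 1
      ring
    calc r ^ (k+K) * (1 / Real.Gamma (a * (↑k + ↑K) + c))
        ≤ r ^ (k+K) * (Real.exp s * (s ^ (2-c) * (s ^ (-(a*(K:ℝ))) * ((s^a)^k)⁻¹))) :=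
          mul_le_mul_of_nonneg_left hinv (by positivity)
      _ = (Real.exp s * s ^ (2 - c) * s ^ (-(a*(K:ℝ))) * r ^ K) * (r / s ^ a) ^ k := by
          rw [pow_add, div_pow, div_eq_mul_inv]; ring
  have hq0 : 0 ≤ r / s ^ a := by positivity
  have hq1 : r / s ^ a < 1 := (div_lt_one hsa0).mpr (by linarith)
  refine Summable.of_nonneg_of_le (fun k => by positivity) hbound ?_
  exact (summable_geometric_of_lt_one hq0 hq1).mul_left _

/-- Gamma recurrence for reciprocals, valid for all reals with the 0-convention. -/
lemma one_div_gamma_step (z : ℝ) : (z - 1) / Real.Gamma z = 1 / Real.Gamma (z - 1) := by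
  by_cases hz : z = 1
  · simp [hz, Real.Gamma_zero]
  · have h1 : z - 1 ≠ 0 := fun h => hz (by linarith [sub_eq_zero.mp h])
    have hrec : Real.Gamma z = (z - 1) * Real.Gamma (z - 1) := by
      have := Real.Gamma_add_one h1
      rwa [sub_add_cancel] at this
    by_cases hG : Real.Gamma (z - 1) = 0
    · rw [hG, hrec, hG, mul_zero, div_zero, div_zero]
    · rw [hrec]
      field_simp
lemma rpow_le_endpoints {A B y e : ℝ} (hA : 0 < A) (h1 : A ≤ y) (h2 : y ≤ B) :
    y ^ e ≤ A ^ e + B ^ e := by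
  rcases le_or_gt 0 e with he | he
  · have : y ^ e ≤ B ^ e := Real.rpow_le_rpow (by linarith) h2 he
    have hAe : 0 ≤ A ^ e := Real.rpow_nonneg hA.le e
    linarith
  · have : y ^ e ≤ A ^ e := Real.rpow_le_rpow_of_nonpos hA h1 he.le
    have hBe : 0 ≤ B ^ e := Real.rpow_nonneg (by linarith) e
    linarith

noncomputable def mlAux (α γ : ℝ) (y : ℝ) : ℝ :=
  ∑' k : ℕ, y ^ (α * k + γ - 1) / Real.Gamma (α * k + γ)


lemma mlAux_eq {α γ y : ℝ} (hα : 0 < α) (hy : 0 < y) :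
    y ^ (γ - 1) * (∑' k : ℕ, (y ^ α) ^ k / Real.Gamma (α * k + γ)) = mlAux α γ y := by
  rw [← tsum_mul_left]
  refine tsum_congr fun k => ?_
  have h1 : (y ^ α) ^ k = y ^ (α * k) := by
    rw [← Real.rpow_natCast (y ^ α) k, ← Real.rpow_mul hy.le]
  rw [h1, ← mul_div_assoc, ← Real.rpow_add hy]
  congr 2
  ring

lemma mlAux_summable {α γ y : ℝ} (hα : 0 < α) (hy : 0 < y) :
    Summable (fun k : ℕ => y ^ (α * k + γ - 1) / Real.Gamma (α * k + γ)) := by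
  refine Summable.of_abs ?_
  have h := (summable_pow_div_gamma hα γ (Real.rpow_nonneg hy.le α)).mul_left (y ^ (γ - 1))
  refine h.congr fun k => ?_
  have h1 : (y ^ α) ^ k = y ^ (α * k) := by
    rw [← Real.rpow_natCast (y ^ α) k, ← Real.rpow_mul hy.le]
  have h2 : |y ^ (α * ↑k + γ - 1) / Real.Gamma (α * ↑k + γ)|
      = y ^ (α * ↑k + γ - 1) * |1 / Real.Gamma (α * ↑k + γ)| := by
    rw [div_eq_mul_one_div, abs_mul, abs_of_pos (Real.rpow_pos_of_pos hy _)]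
  rw [h2, h1]
  rw [show y ^ (α * ↑k + γ - 1) = y ^ (γ - 1) * y ^ (α * ↑k) by
    rw [← Real.rpow_add hy]; congr 1; ring]
  ring

lemma mlAux_hasDerivAt {α : ℝ} (hα : 0 < α) (γ : ℝ) {x : ℝ} (hx : 0 < x) :
    HasDerivAt (mlAux α γ) (mlAux α (γ - 1) x) x := by
  set A : ℝ := x / 2 with hA
  set B : ℝ := x + 1 with hB
  have hA0 : 0 < A := by positivity
  have hAB : A < B := by rw [hA, hB]; linarith
  set g : ℕ → ℝ → ℝ := fun k y => y ^ (α * k + γ - 1) / Real.Gamma (α * k + γ) with hg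
  set g' : ℕ → ℝ → ℝ :=
    fun k y => (α * k + γ - 1) * y ^ (α * k + γ - 2) / Real.Gamma (α * k + γ) with hg'
  set u : ℕ → ℝ := fun k => (α * k + |γ - 1|) *
      ((A ^ (γ - 2) + B ^ (γ - 2)) * (A ^ α + B ^ α) ^ k) * |1 / Real.Gamma (α * k + γ)| with hu
  have hmem : x ∈ Set.Ioo A B := by constructor <;> [skip; skip] <;> simp [hA, hB] <;> linarith
  have hder : ∀ k y, y ∈ Set.Ioo A B → HasDerivAt (g k) (g' k y) y := by
    intro k y hy
    have hy0 : y ≠ 0 := ne_of_gt (lt_trans hA0 hy.1)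
    have h := (Real.hasDerivAt_rpow_const (p := α * k + γ - 1) (Or.inl hy0)).div_const
      (Real.Gamma (α * k + γ))
    simpa [show α * (k:ℝ) + γ - 1 - 1 = α * (k:ℝ) + γ - 2 by ring] using h
  have hbound : ∀ k y, y ∈ Set.Ioo A B → ‖g' k y‖ ≤ u k := by
    intro k y hy
    have hy0 : 0 < y := lt_trans hA0 hy.1
    rw [Real.norm_eq_abs, hg', hu]
    simp only
    rw [show (α * k + γ - 1) * y ^ (α * k + γ - 2) / Real.Gamma (α * k + γ)
        = (α * k + γ - 1) * y ^ (α * k + γ - 2) * (1 / Real.Gamma (α * k + γ)) by ring]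
    rw [abs_mul, abs_mul]
    have h1 : |α * k + γ - 1| ≤ α * k + |γ - 1| := by
      rw [show α * (k:ℝ) + γ - 1 = α * k + (γ - 1) by ring]
      calc |α * (k:ℝ) + (γ - 1)| ≤ |α * (k:ℝ)| + |γ - 1| := abs_add_le _ _
        _ = α * k + |γ - 1| := by rw [abs_of_nonneg (by positivity)]
    have h2 : |y ^ (α * k + γ - 2)| ≤ (A ^ (γ - 2) + B ^ (γ - 2)) * (A ^ α + B ^ α) ^ k := by
      rw [abs_of_pos (Real.rpow_pos_of_pos hy0 _)]
      have hstep : ∀ C : ℝ, 0 < C → C ^ (α * k + γ - 2) = C ^ (γ - 2) * (C ^ α) ^ k := by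
        intro C hC
        rw [← Real.rpow_natCast (C ^ α) k, ← Real.rpow_mul hC.le, ← Real.rpow_add hC]
        congr 1; ring
      calc y ^ (α * k + γ - 2) ≤ A ^ (α * k + γ - 2) + B ^ (α * k + γ - 2) :=
            rpow_le_endpoints hA0 hy.1.le hy.2.le
        _ = A ^ (γ - 2) * (A ^ α) ^ k + B ^ (γ - 2) * (B ^ α) ^ k := by
            rw [hstep A hA0, hstep B (lt_trans hA0 hAB)]
        _ ≤ A ^ (γ - 2) * (A ^ α + B ^ α) ^ k + B ^ (γ - 2) * (A ^ α + B ^ α) ^ k := by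
            have hB0 : (0:ℝ) < B := lt_trans hA0 hAB
            have hA1 : (A ^ α) ^ k ≤ (A ^ α + B ^ α) ^ k :=
              pow_le_pow_left₀ (Real.rpow_nonneg hA0.le α)
                (by linarith [Real.rpow_nonneg hB0.le α]) k
            have hB1 : (B ^ α) ^ k ≤ (A ^ α + B ^ α) ^ k :=
              pow_le_pow_left₀ (Real.rpow_nonneg hB0.le α)
                (by linarith [Real.rpow_nonneg hA0.le α]) k
            have hAe : (0:ℝ) ≤ A ^ (γ - 2) := Real.rpow_nonneg hA0.le _
            have hBe : (0:ℝ) ≤ B ^ (γ - 2) := Real.rpow_nonneg hB0.le _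
            nlinarith
        _ = (A ^ (γ - 2) + B ^ (γ - 2)) * (A ^ α + B ^ α) ^ k := by ring
    refine mul_le_mul_of_nonneg_right ?_ (abs_nonneg _)
    exact mul_le_mul h1 h2 (abs_nonneg _) (by positivity)
  have husum : Summable u := by
    refine Summable.of_nonneg_of_le (fun k => by positivity) (fun k => ?_)
      (((summable_pow_div_gamma hα γ (r := 2 * (A ^ α + B ^ α)) (by positivity)).mul_left
        ((α + |γ - 1|) * (A ^ (γ - 2) + B ^ (γ - 2))))) 
    rw [hu]
    simp only
    have hk2 : (k : ℝ) + 1 ≤ 2 ^ k := by exact_mod_cast (Nat.lt_two_pow_self (n := k))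
    have h1 : α * k + |γ - 1| ≤ (α + |γ - 1|) * 2 ^ k := by
      have h2 : α * k + |γ - 1| ≤ (α + |γ - 1|) * ((k : ℝ) + 1) := by
        have := abs_nonneg (γ - 1)
        nlinarith [hα.le, Nat.cast_nonneg (α := ℝ) k]
      refine h2.trans ?_
      have : (0:ℝ) ≤ α + |γ - 1| := by positivity
      nlinarith
    have h3 : (2 * (A ^ α + B ^ α)) ^ k = 2 ^ k * (A ^ α + B ^ α) ^ k := by
      rw [mul_pow]
    rw [mul_comm ((α + |γ - 1|) * (A ^ (γ - 2) + B ^ (γ - 2)))]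
    rw [h3]
    have hC : (0:ℝ) ≤ A ^ (γ - 2) + B ^ (γ - 2) := by positivity
    have hG : (0:ℝ) ≤ |1 / Real.Gamma (α * k + γ)| := abs_nonneg _
    have hP : (0:ℝ) ≤ (A ^ α + B ^ α) ^ k := by positivity
    nlinarith [mul_le_mul_of_nonneg_right h1 (mul_nonneg hC (mul_nonneg hP hG)),
      mul_nonneg (mul_nonneg hC hP) hG]
  have hmain := hasDerivAt_tsum_of_isPreconnected husum isOpen_Ioo
    (isPreconnected_Ioo) hder hbound hmem (mlAux_summable hα (lt_trans hA0 hmem.1)) hmem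
  have heq : (∑' k, g' k x) = mlAux α (γ - 1) x := by
    refine tsum_congr fun k => ?_
    rw [hg']
    simp only
    rw [show (α * k + γ - 1) * x ^ (α * k + γ - 2) / Real.Gamma (α * k + γ)
        = x ^ (α * k + γ - 2) * (((α * k + γ) - 1) / Real.Gamma (α * k + γ)) by ring]
    rw [one_div_gamma_step (α * k + γ)]
    rw [show α * (k:ℝ) + γ - 2 = α * k + (γ - 1) - 1 by ring,
        show α * (k:ℝ) + γ - 1 = α * k + (γ - 1) by ring]
    rw [mul_one_div]
  rw [← heq]
  exact hmain

lemma mlAux_iteratedDeriv {α : ℝ} (hα : 0 < α) :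
    ∀ (m : ℕ) (γ : ℝ) (x : ℝ), 0 < x →
      iteratedDeriv m (mlAux α γ) x = mlAux α (γ - m) x := by
  intro m
  induction m with
  | zero => intro γ x hx; simp [iteratedDeriv_zero]
  | succ m ih =>
    intro γ x hx
    rw [iteratedDeriv_succ']
    have hev : deriv (mlAux α γ) =ᶠ[nhds x] mlAux α (γ - 1) := by
      filter_upwards [isOpen_Ioi.mem_nhds hx] with y hy
      exact (mlAux_hasDerivAt hα γ hy).deriv
    rw [hev.iteratedDeriv_eq m, ih (γ - 1) x hx]
    congr 1
    push_cast
    ring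

/-- For `0 < α ≤ 1`, `β > 0`, `m ≥ 1` and `x > 0`,
`(d^m/dx^m)[x^{β-1} E_{α,β}(x^α)] = x^{β-m-1} E_{α,β-m}(x^α)`. -/
theorem ml_derivative_identity (α β : ℝ) (hα : α ∈ Set.Ioc (0 : ℝ) 1) (hβ : 0 < β)
    (m : ℕ) (hm : 1 ≤ m) :
    ∀ x : ℝ, 0 < x →
      iteratedDeriv m (fun y : ℝ => y ^ (β - 1) * scalarML α β (y ^ α)) x
        = x ^ (β - m - 1) * scalarML α (β - m) (x ^ α) := by
  intro x hx
  have hα0 : 0 < α := hα.1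
  have hev : (fun y : ℝ => y ^ (β - 1) * scalarML α β (y ^ α)) =ᶠ[nhds x] mlAux α β := by
    filter_upwards [isOpen_Ioi.mem_nhds hx] with y hy
    exact mlAux_eq hα0 hy
  rw [hev.iteratedDeriv_eq m, mlAux_iteratedDeriv hα0 m β x hx]
  exact (mlAux_eq hα0 hx).symm
end
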